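/- Let V be a real vector space, λ, α ∈ ℝ, and let (S^(j)), (T^(j)), (G^(j)) be sequences in V with S^(j+1) = S^(j) − λ G^(j) (gradient descent), T^(j+1) = α T^(j) + (1 − α) S^(j+1) (EMA teacher updated after every student step), and T^(0) = S^(0). Then for every t ≥ 0, S^(t) − T^(t) = −λ · Σ_{i=1}^{t} α^i G^(t−i); that is, the student–teacher difference is exactly minus λ times the exponentially weighted sum of the previous gradient directions, with weight α^i on the direction from i steps ago. -/

import Mathlib

/-- Student–teacher difference: with gradient descent `S (j+1) = S j − λ • G j`, EMA teacher
`T (j+1) = α • T j + (1 − α) • S (j+1)` and `T 0 = S 0`, for every `t` the difference equals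
`S t − T t = −λ • ∑_{i=1}^{t} α^i • G (t − i)`. -/
theorem student_teacher_difference {V : Type*} [AddCommGroup V] [Module ℝ V]
    (lam α : ℝ) (S T G : ℕ → V)
    (hS : ∀ j, S (j + 1) = S j - lam • G j)
    (hT : ∀ j, T (j + 1) = α • T j + (1 - α) • S (j + 1))
    (hT0 : T 0 = S 0) :
    ∀ t : ℕ, S t - T t = -(lam • ∑ i ∈ Finset.Icc 1 t, α ^ i • G (t - i)) := by
  intro t
  induction t with
  | zero => simp [hT0]
  | succ t ih =>
    have key : S (t + 1) - T (t + 1) = α • (S t - T t) - (α * lam) • G t := by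
      rw [hT t, hS t]
      module
    rw [key, ih, ← Finset.Ico_add_one_right_eq_Icc, ← Finset.Ico_add_one_right_eq_Icc,
      Finset.sum_Ico_eq_sum_range, Finset.sum_Ico_eq_sum_range]
    simp only [Nat.add_sub_cancel]
    rw [Finset.sum_range_succ']
    simp only [Finset.smul_sum, smul_smul, smul_neg]
    have h1 : ∀ i ∈ Finset.range t,
        (α * (lam * α ^ (1 + i))) • G (t - (1 + i))
          = (lam * α ^ (1 + (i + 1))) • G (t + 1 - (1 + (i + 1))) := by
      intro i hi
      have : t + 1 - (1 + (i + 1)) = t - (1 + i) := by omega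
      rw [this]
      ring_nf
    rw [Finset.sum_congr rfl h1]
    have h0 : t + 1 - (1 + 0) = t := by omega
    rw [h0]
    simp only [smul_add, Finset.smul_sum, smul_smul, neg_add, zero_add, pow_one]
    module
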